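/- Let 1 ≤ p < ∞ and let v₀ : ℝ^{M×N} → ℝ be continuous and bounded, and set v(s) := v₀(s)(1+|s|^p). If there exists a continuous function α : [0,∞) → [0,∞) with α(0)=0 such that |v₀(s)-v₀(t)| ≤ α(|s-t|/(1+|s|+|t|)) for all s,t, then there exists a continuous function β : [0,∞) → [0,∞) with β(0)=0 such that |v(s)-v(t)| ≤ β(|s-t|/(1+|s|+|t|))·(1+|s|^p+|t|^p) for all s,t ∈ ℝ^{M×N}. -/

import Mathlib

open MeasureTheory Metric Filter
open scoped ENNReal Topology

noncomputable section

abbrev EN (N : ℕ) : Type := EuclideanSpace ℝ (Fin N)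
abbrev Mat (M N : ℕ) : Type := Matrix (Fin M) (Fin N) ℝ

/-- Frobenius norm on real `M × N` matrices. -/
def fnorm {M N : ℕ} (s : Mat M N) : ℝ := Real.sqrt (∑ i, ∑ j, (s i j) ^ 2)

/-- The matrix of partial derivatives (gradient) of `φ : ℝ^N → ℝ^M` at `x`,
computed via the Fréchet derivative (junk value `0` where `φ` is not differentiable). -/
def grad {M N : ℕ} (φ : EN N → EN M) (x : EN N) : Mat M N :=
  Matrix.of fun i j => fderiv ℝ φ x (EuclideanSpace.single j 1) i

lemma fnorm_nonneg {M N : ℕ} (s : Mat M N) : 0 ≤ fnorm s := Real.sqrt_nonneg _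

lemma fnorm_eq {M N : ℕ} (s : Mat M N) :
    fnorm s = ‖((WithLp.equiv 2 (Fin M × Fin N → ℝ)).symm fun ij => s ij.1 ij.2 :
      EuclideanSpace ℝ (Fin M × Fin N))‖ := by
  rw [EuclideanSpace.norm_eq, Fintype.sum_prod_type]
  simp [fnorm, Real.norm_eq_abs, sq_abs]

lemma fnorm_sub_comm {M N : ℕ} (s t : Mat M N) : fnorm (s - t) = fnorm (t - s) := by
  unfold fnorm
  congr 1
  congr 1 with i
  congr 1 with j
  have : (s - t) i j = -((t - s) i j) := by simp [Matrix.sub_apply]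
  rw [this, neg_sq]

lemma fnorm_sub_fnorm_le {M N : ℕ} (s t : Mat M N) :
    fnorm s - fnorm t ≤ fnorm (s - t) := by
  rw [fnorm_eq s, fnorm_eq t, fnorm_eq (s - t)]
  have h : ((WithLp.equiv 2 (Fin M × Fin N → ℝ)).symm fun ij => (s - t) ij.1 ij.2 :
      EuclideanSpace ℝ (Fin M × Fin N)) =
      ((WithLp.equiv 2 (Fin M × Fin N → ℝ)).symm fun ij => s ij.1 ij.2) -
      ((WithLp.equiv 2 (Fin M × Fin N → ℝ)).symm fun ij => t ij.1 ij.2) := by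
    rfl
  rw [h]
  exact norm_sub_norm_le _ _

/-- Key elementary estimate for `b ≤ a`. -/
lemma rpow_sub_rpow_key {p : ℝ} (hp : 1 ≤ p) {a b : ℝ} (hb : 0 ≤ b) (hba : b ≤ a) :
    a ^ p - b ^ p ≤ 3 * p * ((a - b) / (1 + a + b)) * (1 + a ^ p + b ^ p) := by
  have ha : 0 ≤ a := hb.trans hba
  have hp0 : (0:ℝ) < p := lt_of_lt_of_le one_pos hp
  rcases eq_or_lt_of_le ha with h0 | ha'
  · have ha0 : a = 0 := h0.symm
    have hb0 : b = 0 := le_antisymm (ha0 ▸ hba) hb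
    subst ha0; subst hb0
    simp [Real.zero_rpow (ne_of_gt hp0)]
  · -- a > 0
    set u : ℝ := (a - b) / a with hu
    have hu0 : 0 ≤ u := div_nonneg (by linarith) ha'.le
    have hu1 : u ≤ 1 := by
      rw [hu, div_le_one ha']; linarith
    have hbu : b = a * (1 - u) := by
      rw [hu, mul_sub, mul_div_assoc', mul_div_cancel_left₀ _ (ne_of_gt ha')]; ring
    -- Bernoulli: (1 - u) ^ p ≥ 1 - p * u
    have hbern := one_add_mul_self_le_rpow_one_add (s := -u) (by linarith) hp
    have h1u : (0:ℝ) ≤ 1 - u := by linarith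
    have hbp : a ^ p * (1 - p * u) ≤ b ^ p := by
      rw [hbu, Real.mul_rpow ha'.le h1u]
      have : (1 : ℝ) + p * (-u) ≤ (1 + (-u)) ^ p := hbern
      have h2 : (1 : ℝ) - p * u ≤ (1 - u) ^ p := by
        have e1 : (1:ℝ) + p * (-u) = 1 - p * u := by ring
        have e2 : (1:ℝ) + (-u) = 1 - u := by ring
        rw [e1, e2] at this; exact this
      have := mul_le_mul_of_nonneg_left h2 (Real.rpow_nonneg ha'.le p)
      linarith
    -- step 1
    have hapu : a ^ p * u = a ^ (p - 1) * (a - b) := by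
      have : a ^ p = a ^ (p - 1) * a := by
        rw [← Real.rpow_add_one (ne_of_gt ha')]
        ring_nf
      rw [this, hu]
      field_simp
    have step1 : a ^ p - b ^ p ≤ p * (a ^ (p - 1) * (a - b)) := by
      have : a ^ p - b ^ p ≤ a ^ p * (p * u) := by nlinarith [hbp]
      calc a ^ p - b ^ p ≤ a ^ p * (p * u) := this
        _ = p * (a ^ p * u) := by ring
        _ = p * (a ^ (p - 1) * (a - b)) := by rw [hapu]
    -- step 2
    have hap1 : a ^ (p - 1) ≤ 1 + a ^ p := by
      rcases le_total a 1 with h | h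
      · have := Real.rpow_le_one ha h (by linarith : (0:ℝ) ≤ p - 1)
        have := Real.rpow_nonneg ha p
        linarith
      · have := Real.rpow_le_rpow_of_exponent_le h (by linarith : p - 1 ≤ p)
        linarith
    have hapa : a ^ (p - 1) * a = a ^ p := by
      rw [← Real.rpow_add_one (ne_of_gt ha')]; ring_nf
    have hapb : a ^ (p - 1) * b ≤ a ^ p := by
      calc a ^ (p - 1) * b ≤ a ^ (p - 1) * a :=
            mul_le_mul_of_nonneg_left hba (Real.rpow_nonneg ha (p-1))
        _ = a ^ p := hapa
    have hbpn : 0 ≤ b ^ p := Real.rpow_nonneg hb p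
    have hapn : 0 ≤ a ^ p := Real.rpow_nonneg ha p
    have step2 : a ^ (p - 1) * (1 + a + b) ≤ 3 * (1 + a ^ p + b ^ p) := by
      have : a ^ (p - 1) * (1 + a + b)
          = a ^ (p - 1) + a ^ (p - 1) * a + a ^ (p - 1) * b := by ring
      rw [this, hapa]
      linarith
    -- combine
    have hden : (0:ℝ) < 1 + a + b := by linarith
    have hr0 : 0 ≤ (a - b) / (1 + a + b) := div_nonneg (by linarith) hden.le
    calc a ^ p - b ^ p ≤ p * (a ^ (p - 1) * (a - b)) := step1
      _ = p * ((a - b) / (1 + a + b) * (a ^ (p - 1) * (1 + a + b))) := by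
          field_simp
      _ ≤ p * ((a - b) / (1 + a + b) * (3 * (1 + a ^ p + b ^ p))) := by
          apply mul_le_mul_of_nonneg_left _ hp0.le
          exact mul_le_mul_of_nonneg_left step2 hr0
      _ = 3 * p * ((a - b) / (1 + a + b)) * (1 + a ^ p + b ^ p) := by ring

lemma rpow_fnorm_sub_le {M N : ℕ} {p : ℝ} (hp : 1 ≤ p) (s t : Mat M N) :
    |fnorm s ^ p - fnorm t ^ p| ≤
      3 * p * (fnorm (s - t) / (1 + fnorm s + fnorm t)) * (1 + fnorm s ^ p + fnorm t ^ p) := by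
  have main : ∀ s t : Mat M N, fnorm t ≤ fnorm s →
      fnorm s ^ p - fnorm t ^ p ≤
        3 * p * (fnorm (s - t) / (1 + fnorm s + fnorm t)) *
          (1 + fnorm s ^ p + fnorm t ^ p) := by
    intro s t h
    have hkey := rpow_sub_rpow_key hp (fnorm_nonneg t) h
    have hden : (0:ℝ) < 1 + fnorm s + fnorm t := by
      have := fnorm_nonneg s; have := fnorm_nonneg t; linarith
    have hnum : fnorm s - fnorm t ≤ fnorm (s - t) := fnorm_sub_fnorm_le s t
    have hp0 : (0:ℝ) < p := lt_of_lt_of_le one_pos hp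
    have hW : (0:ℝ) ≤ 1 + fnorm s ^ p + fnorm t ^ p := by
      have := Real.rpow_nonneg (fnorm_nonneg s) p
      have := Real.rpow_nonneg (fnorm_nonneg t) p
      linarith
    calc fnorm s ^ p - fnorm t ^ p
        ≤ 3 * p * ((fnorm s - fnorm t) / (1 + fnorm s + fnorm t)) *
            (1 + fnorm s ^ p + fnorm t ^ p) := hkey
      _ ≤ 3 * p * (fnorm (s - t) / (1 + fnorm s + fnorm t)) *
            (1 + fnorm s ^ p + fnorm t ^ p) := by
          gcongr
  rcases le_total (fnorm t) (fnorm s) with h | h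
  · rw [abs_of_nonneg]
    · exact main s t h
    · have := Real.rpow_le_rpow (fnorm_nonneg t) h (by linarith : (0:ℝ) ≤ p)
      linarith
  · rw [abs_sub_comm, abs_of_nonneg]
    · have := main t s h
      rw [fnorm_sub_comm t s] at this
      calc fnorm t ^ p - fnorm s ^ p
          ≤ 3 * p * (fnorm (s - t) / (1 + fnorm t + fnorm s)) *
              (1 + fnorm t ^ p + fnorm s ^ p) := this
        _ = 3 * p * (fnorm (s - t) / (1 + fnorm s + fnorm t)) *
              (1 + fnorm s ^ p + fnorm t ^ p) := by ring_nf
    · have := Real.rpow_le_rpow (fnorm_nonneg s) h (by linarith : (0:ℝ) ≤ p)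
      linarith

/-- if `v₀` is continuous, bounded and relatively uniformly continuous
(with modulus `α`), then `v(s) = v₀(s)(1+|s|^p)` satisfies the corresponding
modulus estimate with weight `1+|s|^p+|t|^p`. -/
theorem stmt0 {M N : ℕ} (p : ℝ) (hp : 1 ≤ p)
    (v₀ : Mat M N → ℝ) (hv₀c : Continuous v₀) (hv₀b : ∃ C : ℝ, ∀ s, |v₀ s| ≤ C)
    (v : Mat M N → ℝ) (hv : ∀ s, v s = v₀ s * (1 + fnorm s ^ p))
    (α : ℝ → ℝ) (hαc : Continuous α) (hα0 : α 0 = 0) (hαnn : ∀ x, 0 ≤ x → 0 ≤ α x)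
    (hα : ∀ s t : Mat M N,
      |v₀ s - v₀ t| ≤ α (fnorm (s - t) / (1 + fnorm s + fnorm t))) :
    ∃ β : ℝ → ℝ, Continuous β ∧ β 0 = 0 ∧ (∀ x, 0 ≤ x → 0 ≤ β x) ∧
      ∀ s t : Mat M N,
        |v s - v t| ≤ β (fnorm (s - t) / (1 + fnorm s + fnorm t))
          * (1 + fnorm s ^ p + fnorm t ^ p) := by
  obtain ⟨C, hC⟩ := hv₀b
  have hC0 : 0 ≤ C := (abs_nonneg _).trans (hC 0)
  have hp0 : (0:ℝ) < p := lt_of_lt_of_le one_pos hp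
  refine ⟨fun x => α x + 3 * p * C * x, ?_, ?_, ?_, ?_⟩
  · exact hαc.add (by continuity)
  · simp [hα0]
  · intro x hx
    have : 0 ≤ 3 * p * C * x := by positivity
    have := hαnn x hx
    simp only []
    linarith
  · intro s t
    set a := fnorm s
    set b := fnorm t
    set r := fnorm (s - t) / (1 + a + b) with hr
    have hden : (0:ℝ) < 1 + a + b := by
      have := fnorm_nonneg s; have := fnorm_nonneg t; linarith
    have hr0 : 0 ≤ r := div_nonneg (fnorm_nonneg _) hden.le
    have hapn : 0 ≤ a ^ p := Real.rpow_nonneg (fnorm_nonneg s) p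
    have hbpn : 0 ≤ b ^ p := Real.rpow_nonneg (fnorm_nonneg t) p
    have hW : (0:ℝ) ≤ 1 + a ^ p + b ^ p := by linarith
    have hsplit : v s - v t = (v₀ s - v₀ t) * (1 + a ^ p) + v₀ t * (a ^ p - b ^ p) := by
      rw [hv s, hv t]; ring
    have h1 : |v₀ s - v₀ t| * (1 + a ^ p) ≤ α r * (1 + a ^ p + b ^ p) := by
      have hα1 := hα s t
      have hαr : 0 ≤ α r := hαnn r hr0
      calc |v₀ s - v₀ t| * (1 + a ^ p) ≤ α r * (1 + a ^ p) := by
            apply mul_le_mul_of_nonneg_right hα1 (by linarith)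
        _ ≤ α r * (1 + a ^ p + b ^ p) := by
            apply mul_le_mul_of_nonneg_left _ hαr
            linarith
    have h2 : |v₀ t| * |a ^ p - b ^ p| ≤ C * (3 * p * r * (1 + a ^ p + b ^ p)) := by
      apply mul_le_mul (hC t) _ (abs_nonneg _) hC0
      have := rpow_fnorm_sub_le hp s t
      calc |a ^ p - b ^ p| ≤ 3 * p * r * (1 + a ^ p + b ^ p) := this
        _ = 3 * p * r * (1 + a ^ p + b ^ p) := rfl
    calc |v s - v t| = |(v₀ s - v₀ t) * (1 + a ^ p) + v₀ t * (a ^ p - b ^ p)| := by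
          rw [hsplit]
      _ ≤ |(v₀ s - v₀ t) * (1 + a ^ p)| + |v₀ t * (a ^ p - b ^ p)| := abs_add_le _ _
      _ = |v₀ s - v₀ t| * (1 + a ^ p) + |v₀ t| * |a ^ p - b ^ p| := by
          rw [abs_mul, abs_mul, abs_of_nonneg (by linarith : (0:ℝ) ≤ 1 + a ^ p)]
      _ ≤ α r * (1 + a ^ p + b ^ p) + C * (3 * p * r * (1 + a ^ p + b ^ p)) := by
          linarith
      _ = (α r + 3 * p * C * r) * (1 + a ^ p + b ^ p) := by ring
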